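/- For every nontrivial tree T = (V,E) of order n with leaf set L, ψ_q(T) ≥ μ(T[V \ L]) + n − Σ_{v ∈ V \ L} ⌊d_T(v)/2⌋, where μ denotes the matching number and d_T(v) the degree of v in T. -/

import Mathlib

open Finset SimpleGraph
open scoped Classical

/-- The closed neighborhood `N[v]` of `v` in `G`, as a finset. -/
noncomputable def closedNbhd {V : Type*} [Fintype V] (G : SimpleGraph V) (v : V) : Finset V :=
  Finset.univ.filter fun u => u = v ∨ G.Adj u v

/-- The degree of `v` in `G`. -/
noncomputable def deg {V : Type*} [Fintype V] (G : SimpleGraph V) (v : V) : ℕ :=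
  (Finset.univ.filter fun u => G.Adj v u).card

/-- A coloring `c` is a quorum coloring if every vertex has at least half of its
closed neighborhood in its own color class. -/
noncomputable def IsQuorumColoring {V : Type*} [Fintype V] (G : SimpleGraph V) (c : V → ℕ) : Prop :=
  ∀ v : V, (closedNbhd G v).card ≤ 2 * ((closedNbhd G v).filter fun u => c u = c v).card

/-- Number of color classes (distinct used colors) of a coloring. -/
noncomputable def numClasses {V : Type*} [Fintype V] (c : V → ℕ) : ℕ :=
  (Finset.univ.image c).card

/-- The quorum coloring number `ψ_q(G)`. -/
noncomputable def quorumNumber {V : Type*} [Fintype V] (G : SimpleGraph V) : ℕ :=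
  sSup {k | ∃ c : V → ℕ, IsQuorumColoring G c ∧ numClasses c = k}

/-- A coloring is cost-effective if every vertex meets the quorum bound with equality:
`|N[v] ∩ π(v)| = ⌈|N[v]|/2⌉`. -/
noncomputable def IsCostEffective {V : Type*} [Fintype V] (G : SimpleGraph V) (c : V → ℕ) : Prop :=
  ∀ v : V, ((closedNbhd G v).filter fun u => c u = c v).card = ((closedNbhd G v).card + 1) / 2

/-- The matching number of a graph: the largest number of edges in a matching. -/
noncomputable def matchingNumber {W : Type*} (H : SimpleGraph W) : ℕ :=
  sSup {k | ∃ M : H.Subgraph, M.IsMatching ∧ M.edgeSet.ncard = k}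

lemma card_le_comp_add_edges {V : Type*} [Fintype V] (H : SimpleGraph V) :
    Fintype.card V ≤ Nat.card H.ConnectedComponent + H.edgeSet.ncard := by
  classical
  haveI : Finite H.ConnectedComponent :=
    Finite.of_surjective H.connectedComponentMk Quot.mk_surjective
  haveI : Fintype H.ConnectedComponent := Fintype.ofFinite _
  set rep : V → V := fun v => (H.connectedComponentMk v).out with hrepdef
  have hrepmk : ∀ v, H.connectedComponentMk (rep v) = H.connectedComponentMk v := by
    intro v; exact Quot.out_eq _
  have hreprep : ∀ v w : V, H.connectedComponentMk v = H.connectedComponentMk w →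
      rep v = rep w := by
    intro v w h; simp only [hrepdef, h]
  set A : Finset V := Finset.univ.filter (fun v => rep v ≠ v) with hA
  set B : Finset V := Finset.univ.filter (fun v => rep v = v) with hB
  have hsplit : B.card + A.card = Fintype.card V := by
    rw [hA, hB]
    simpa using Finset.card_filter_add_card_filter_not
      (s := (Finset.univ : Finset V)) (p := fun v => rep v = v)
  have hBle : B.card ≤ Nat.card H.ConnectedComponent := by
    rw [Nat.card_eq_fintype_card]
    apply Finset.card_le_card_of_injOn H.connectedComponentMk (fun v _ => Finset.mem_univ _)
    intro x hx y hy hxy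
    have hx' : rep x = x := (Finset.mem_filter.mp hx).2
    have hy' : rep y = y := (Finset.mem_filter.mp hy).2
    rw [← hx', ← hy']
    exact hreprep x y hxy
  have hnext : ∀ v : V, v ∈ A → ∃ w, H.Adj v w ∧ rep w = rep v ∧
      H.dist w (rep w) < H.dist v (rep v) := by
    intro v hv
    have hne : rep v ≠ v := (Finset.mem_filter.mp hv).2
    have hreach : H.Reachable v (rep v) :=
      ((ConnectedComponent.eq).mp (hrepmk v)).symm
    have hpos : 0 < H.dist v (rep v) := hreach.pos_dist_of_ne (Ne.symm hne)
    obtain ⟨p, hp⟩ := hreach.exists_walk_length_eq_dist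
    obtain ⟨w, hadj, q, rfl⟩ := SimpleGraph.Walk.exists_eq_cons_of_ne (Ne.symm hne) p
    refine ⟨w, hadj, hreprep w v ((ConnectedComponent.eq).mpr hadj.reachable).symm, ?_⟩
    have hle : H.dist w (rep v) ≤ q.length := dist_le q
    have hq : q.length + 1 = H.dist v (rep v) := by simpa using hp
    have hrw : rep w = rep v := hreprep w v ((ConnectedComponent.eq).mpr hadj.reachable).symm
    rw [hrw]; omega
  choose! next hadj hrepeq hlt using hnext
  have hAle : A.card ≤ H.edgeSet.ncard := by
    rw [Set.ncard_eq_toFinset_card']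
    apply Finset.card_le_card_of_injOn (fun v => s(v, next v))
    · intro v hv
      simp only [Finset.mem_coe, Set.mem_toFinset, mem_edgeSet]
      exact hadj v hv
    · intro x hx y hy hxy
      by_contra hne
      simp only [Sym2.eq_iff] at hxy
      rcases hxy with ⟨h1, h2⟩ | ⟨h1, h2⟩
      · exact hne h1
      · have l1 := hlt x hx
        have l2 := hlt y hy
        rw [h2] at l1
        rw [← h1] at l2
        omega
  omega

/-- lower bound on `ψ_q` of a nontrivial tree:
`ψ_q(T) ≥ μ(T[V \ L]) + n − Σ_{v ∈ V \ L} ⌊d_T(v)/2⌋`. -/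
theorem quorumNumber_tree_lower_bound {V : Type*} [Fintype V] (G : SimpleGraph V)
    (hT : G.IsTree) (hn : 1 < Fintype.card V) :
    matchingNumber (G.induce {v : V | deg G v ≠ 1}) + Fintype.card V -
        ∑ v ∈ Finset.univ.filter (fun v => deg G v ≠ 1), deg G v / 2 ≤
      quorumNumber G := by
  classical
  set L : Set V := {v : V | deg G v ≠ 1} with hLdef
  set G' : SimpleGraph L := G.induce L with hG'def
  set μ : ℕ := matchingNumber G' with hμdef
  -- Step 1: the matching number is attained
  have hattain : ∃ M : G'.Subgraph, M.IsMatching ∧ M.edgeSet.ncard = μ := by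
    have hne : (0 : ℕ) ∈ {k | ∃ M : G'.Subgraph, M.IsMatching ∧ M.edgeSet.ncard = k} := by
      refine ⟨⊥, ?_, ?_⟩
      · intro v hv
        simp [Subgraph.verts_bot] at hv
      · simp [Subgraph.edgeSet_bot]
    have hbdd : BddAbove {k | ∃ M : G'.Subgraph, M.IsMatching ∧ M.edgeSet.ncard = k} := by
      refine ⟨Nat.card (Sym2 L), ?_⟩
      rintro k ⟨M, _, rfl⟩
      have := Set.ncard_le_ncard (Set.subset_univ M.edgeSet) Set.finite_univ
      simpa [Set.ncard_univ] using this
    exact Nat.sSup_mem ⟨0, hne⟩ hbdd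
  obtain ⟨M, hM, hMcard⟩ := hattain
  -- the matching, transferred to V
  set Mv : V → V → Prop := fun a b => ∃ (ha : a ∈ L) (hb : b ∈ L), M.Adj ⟨a, ha⟩ ⟨b, hb⟩
    with hMvdef
  have hMvsymm : ∀ a b, Mv a b → Mv b a := by
    rintro a b ⟨ha, hb, h⟩; exact ⟨hb, ha, h.symm⟩
  have hMvadj : ∀ a b, Mv a b → G.Adj a b := by
    rintro a b ⟨ha, hb, h⟩
    simpa [hG'def] using h.adj_sub
  set matched : V → Prop := fun a => ∃ b, Mv a b with hmatcheddef
  have hex : ∀ a : V, matched a → ∃ b, Mv a b := fun a h => h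
  choose! part hpart using hex
  have huniq : ∀ a b, Mv a b → part a = b := by
    rintro a b hab
    have hm : matched a := ⟨b, hab⟩
    obtain ⟨ha, hb, h⟩ := hab
    obtain ⟨ha', hb', h'⟩ := hpart a hm
    have hv : (⟨a, ha⟩ : L) ∈ M.verts := M.edge_vert h
    obtain ⟨w, _, hwu⟩ := hM hv
    have e1 : (⟨b, hb⟩ : L) = w := hwu _ h
    have e2 : (⟨part a, hb'⟩ : L) = w := by
      apply hwu
      have : (⟨a, ha'⟩ : L) = ⟨a, ha⟩ := rfl
      rwa [this] at h'
    have := e2.trans e1.symm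
    exact Subtype.ext_iff.mp this
  -- neighbor finsets
  set nb : V → Finset V := fun v => Finset.univ.filter (fun u => G.Adj v u) with hnbdef
  have hmemnb : ∀ v u, u ∈ nb v ↔ G.Adj v u := by intro v u; simp [hnbdef]
  have hnbcard : ∀ v, (nb v).card = deg G v := fun v => rfl
  have hmdeg : ∀ a, matched a → a ∈ L := by
    rintro a ⟨b, ha, hb, h⟩; exact ha
  -- the selection sets
  have hSex : ∀ a : V, ∃ s : Finset V, s ⊆ nb a ∧
      s.card = (if a ∈ L then deg G a / 2 else 0) ∧ (matched a → part a ∈ s) := by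
    intro a
    by_cases hm : matched a
    · have haL : a ∈ L := hmdeg a hm
      have hadj : G.Adj a (part a) := hMvadj _ _ (hpart a hm)
      have hp : part a ∈ nb a := (hmemnb a _).mpr hadj
      have hd1 : deg G a ≠ 1 := haL
      have hdpos : 1 ≤ deg G a := by
        rw [← hnbcard]
        exact Finset.card_pos.mpr ⟨part a, hp⟩
      have hd2 : 2 ≤ deg G a := by omega
      obtain ⟨t, hts, htc⟩ := Finset.exists_subset_card_eq
        (s := (nb a).erase (part a)) (n := deg G a / 2 - 1) (by
          rw [Finset.card_erase_of_mem hp, hnbcard]; omega)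
      refine ⟨insert (part a) t, ?_, ?_, fun _ => Finset.mem_insert_self _ _⟩
      · intro x hx
        rcases Finset.mem_insert.mp hx with rfl | hx
        · exact hp
        · exact Finset.erase_subset _ _ (hts hx)
      · rw [Finset.card_insert_of_notMem (fun hc => Finset.notMem_erase _ _ (hts hc)), htc]
        simp only [haL, if_pos]
        omega
    · by_cases haL : a ∈ L
      · obtain ⟨t, hts, htc⟩ := Finset.exists_subset_card_eq
          (s := nb a) (n := deg G a / 2) (by rw [hnbcard]; omega)
        exact ⟨t, hts, by simp [haL, htc], fun h => absurd h hm⟩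
      · exact ⟨∅, by simp, by simp [haL], fun h => absurd h hm⟩
  choose S hSsub hScard hSpart using hSex
  -- the auxiliary graph
  set H : SimpleGraph V := SimpleGraph.fromRel (fun a b => b ∈ S a) with hHdef
  have hHadj : ∀ a b, b ∈ S a → H.Adj a b := by
    intro a b hb
    have : G.Adj a b := (hmemnb a b).mp (hSsub a hb)
    exact ⟨this.ne, Or.inl hb⟩
  -- Fintype of components
  haveI : Finite H.ConnectedComponent :=
    Finite.of_surjective H.connectedComponentMk Quot.mk_surjective
  haveI : Fintype H.ConnectedComponent := Fintype.ofFinite _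
  set eqv := Fintype.equivFin H.ConnectedComponent with heqvdef
  set c : V → ℕ := fun v => (eqv (H.connectedComponentMk v)).val with hcdef
  have hcinj : ∀ v w : V, c v = c w ↔
      H.connectedComponentMk v = H.connectedComponentMk w := by
    intro v w
    constructor
    · intro h
      exact eqv.injective (Fin.val_injective h)
    · intro h; simp [hcdef, h]
  -- closed neighborhoods
  have hclosed : ∀ v, closedNbhd G v = insert v (nb v) := by
    intro v; ext u
    simp only [closedNbhd, Finset.mem_filter, Finset.mem_univ, true_and, Finset.mem_insert,
      hmemnb]
    rw [G.adj_comm]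
  have hclosedcard : ∀ v, (closedNbhd G v).card = deg G v + 1 := by
    intro v
    rw [hclosed v, Finset.card_insert_of_notMem (fun h => G.irrefl ((hmemnb v v).mp h)),
      hnbcard]
  -- quorum property
  have hquorum : IsQuorumColoring G c := by
    intro v
    have hsub : insert v (S v) ⊆ (closedNbhd G v).filter (fun u => c u = c v) := by
      intro u hu
      rcases Finset.mem_insert.mp hu with rfl | hu
      · exact Finset.mem_filter.mpr ⟨by simp [closedNbhd], rfl⟩
      · refine Finset.mem_filter.mpr ⟨?_, ?_⟩
        · rw [hclosed v]; exact Finset.mem_insert_of_mem (hSsub v hu)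
        · exact (hcinj u v).mpr (ConnectedComponent.sound (hHadj v u hu).symm.reachable)
    have hvS : v ∉ S v := fun h => G.irrefl ((hmemnb v v).mp (hSsub v h))
    have hcard : (S v).card + 1 ≤ ((closedNbhd G v).filter (fun u => c u = c v)).card := by
      rw [← Finset.card_insert_of_notMem hvS]
      exact Finset.card_le_card hsub
    rw [hclosedcard v]
    have hS := hScard v
    by_cases hvL : v ∈ L
    · rw [if_pos hvL] at hS
      have hd1 : deg G v ≠ 1 := hvL
      omega
    · rw [if_neg hvL] at hS
      have hd1 : deg G v = 1 := by
        by_contra h; exact hvL h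
      omega
  -- number of classes
  have hnum : numClasses c = Nat.card H.ConnectedComponent := by
    rw [numClasses, Nat.card_eq_fintype_card]
    have h1 : Finset.univ.image c =
        Finset.image (fun C => (eqv C).val) (Finset.univ.image H.connectedComponentMk) := by
      rw [Finset.image_image]; rfl
    have hsurj : Function.Surjective H.connectedComponentMk := fun C => Quot.exists_rep C
    rw [h1, Finset.card_image_of_injective _
      (fun a b h => eqv.injective (Fin.val_injective h)),
      Finset.image_univ_of_surjective hsurj, Finset.card_univ]
  have hψ : numClasses c ≤ quorumNumber G := by
    apply le_csSup
    · refine ⟨Fintype.card V, ?_⟩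
      rintro k ⟨c', _, rfl⟩
      exact le_trans Finset.card_image_le (by simp)
    · exact ⟨c, hquorum, rfl⟩
  -- the pair counting
  set P : Finset (V × V) := Finset.univ.filter (fun p => p.2 ∈ S p.1) with hPdef
  have hPcard : P.card = ∑ v : V, (S v).card := by
    rw [Finset.card_eq_sum_card_fiberwise
      (f := Prod.fst) (t := Finset.univ) (fun p _ => Finset.mem_univ _)]
    apply Finset.sum_congr rfl
    intro v _
    have himg : P.filter (fun p => p.1 = v) = (S v).image (fun w => (v, w)) := by
      ext ⟨a, b⟩
      simp only [hPdef, Finset.mem_filter, Finset.mem_univ, true_and, Finset.mem_image,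
        Prod.mk.injEq]
      constructor
      · rintro ⟨hb, rfl⟩; exact ⟨b, hb, rfl, rfl⟩
      · rintro ⟨w, hw, rfl, rfl⟩; exact ⟨hw, rfl⟩
    rw [himg, Finset.card_image_of_injective _ (fun x y h => congrArg Prod.snd h)]
  set EF : Finset (Sym2 V) := H.edgeSet.toFinset with hEFdef
  have hPfib : ∀ p ∈ P, s(p.1, p.2) ∈ EF := by
    rintro ⟨a, b⟩ hp
    have hb : b ∈ S a := (Finset.mem_filter.mp hp).2
    simp only [hEFdef, Set.mem_toFinset, mem_edgeSet]
    exact hHadj a b hb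
  have hP2 : P.card = ∑ e ∈ EF, (P.filter (fun p => s(p.1, p.2) = e)).card :=
    Finset.card_eq_sum_card_fiberwise hPfib
  have hfib1 : ∀ e ∈ EF, 1 ≤ (P.filter (fun p => s(p.1, p.2) = e)).card := by
    intro e
    induction e using Sym2.inductionOn with
    | hf a b =>
      intro he
      simp only [hEFdef, Set.mem_toFinset, mem_edgeSet] at he
      obtain ⟨hne, h | h⟩ := he
      · refine Finset.card_pos.mpr ⟨(a, b), ?_⟩
        simp [hPdef, h]
      · refine Finset.card_pos.mpr ⟨(b, a), ?_⟩
        simp [hPdef, h, Sym2.eq_swap]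
  set MF : Finset (Sym2 V) := M.edgeSet.toFinset.image (Sym2.map Subtype.val) with hMFdef
  have hMFcard : MF.card = μ := by
    rw [hMFdef, Finset.card_image_of_injective _ (Sym2.map.injective Subtype.val_injective),
      ← hMcard, Set.ncard_eq_toFinset_card']
  have hMFmutual : ∀ e ∈ MF, 2 ≤ (P.filter (fun p => s(p.1, p.2) = e)).card := by
    intro e he
    simp only [hMFdef, Finset.mem_image, Set.mem_toFinset] at he
    obtain ⟨e', he', rfl⟩ := he
    induction e' using Sym2.inductionOn with
    | hf x y =>
      rw [Subgraph.mem_edgeSet] at he'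
      have hMvxy : Mv ↑x ↑y := ⟨x.2, y.2, he'⟩
      have hMvyx : Mv ↑y ↑x := hMvsymm _ _ hMvxy
      have hpx : part (↑x) = ↑y := huniq _ _ hMvxy
      have hpy : part (↑y) = ↑x := huniq _ _ hMvyx
      have hxy : (↑x : V) ≠ ↑y := (hMvadj _ _ hMvxy).ne
      have h1 : ((↑x : V), (↑y : V)) ∈
          P.filter (fun p => s(p.1, p.2) = Sym2.map Subtype.val s(x, y)) := by
        refine Finset.mem_filter.mpr ⟨Finset.mem_filter.mpr ⟨Finset.mem_univ _, ?_⟩, by simp⟩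
        have := hSpart (↑x) ⟨_, hMvxy⟩
        rwa [hpx] at this
      have h2 : ((↑y : V), (↑x : V)) ∈
          P.filter (fun p => s(p.1, p.2) = Sym2.map Subtype.val s(x, y)) := by
        refine Finset.mem_filter.mpr ⟨Finset.mem_filter.mpr ⟨Finset.mem_univ _, ?_⟩, ?_⟩
        · have := hSpart (↑y) ⟨_, hMvyx⟩
          rwa [hpy] at this
        · simp [Sym2.eq_swap]
      exact Finset.one_lt_card.mpr ⟨_, h1, _, h2, by simp [hxy]⟩
  have hMFsub : MF ⊆ EF := by
    intro e he
    obtain ⟨p, hp⟩ := Finset.card_pos.mp (lt_of_lt_of_le (by norm_num) (hMFmutual e he))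
    obtain ⟨hpP, hpe⟩ := Finset.mem_filter.mp hp
    rw [← hpe]
    exact hPfib p hpP
  have hsum : EF.card + MF.card ≤ P.card := by
    rw [hP2]
    have hle : ∀ e ∈ EF, 1 + (if e ∈ MF then 1 else 0) ≤
        (P.filter (fun p => s(p.1, p.2) = e)).card := by
      intro e he
      by_cases hm : e ∈ MF
      · rw [if_pos hm]; exact hMFmutual e hm
      · rw [if_neg hm]; simpa using hfib1 e he
    calc EF.card + MF.card = ∑ e ∈ EF, (1 + if e ∈ MF then 1 else 0) := by
          rw [Finset.sum_add_distrib, Finset.sum_const, smul_eq_mul, mul_one]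
          congr 1
          rw [Finset.sum_ite_mem, Finset.inter_eq_right.mpr hMFsub, Finset.sum_const,
            smul_eq_mul, mul_one]
      _ ≤ _ := Finset.sum_le_sum hle
  have hSsum : ∑ v ∈ Finset.univ.filter (fun v => deg G v ≠ 1), deg G v / 2 =
      ∑ v : V, (S v).card := by
    rw [Finset.sum_filter]
    apply Finset.sum_congr rfl
    intro v _
    by_cases hvL : deg G v ≠ 1
    · rw [if_pos hvL, hScard v, if_pos (show v ∈ L from hvL)]
    · rw [if_neg hvL, hScard v, if_neg (show v ∉ L from hvL)]
  -- putting it together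
  have hAA := card_le_comp_add_edges H
  have hEFn : H.edgeSet.ncard = EF.card := Set.ncard_eq_toFinset_card' _
  rw [Nat.sub_le_iff_le_add, hSsum, ← hPcard]
  omega
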